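/- Let G be a continuous strictly increasing distribution function and g its continuous positive density. Suppose F_n is a sequence of distribution functions with sup_x |F_n(x) − G(x)| ≤ c/n for a constant c > 0. Fix α ∈ (0,1). Then for all n > c/min(α, 1−α), the quantiles x_{α,n} = F_n^{-1}(1−α) satisfy |x_{α,n} − u_α| ≤ c/(n · m_n) where u_α = G^{-1}(1−α) and m_n = min of g on [G^{-1}(1−α−c/n), G^{-1}(1−α+c/n)]; in particular x_{α,n} → u_α and |x_{α,n} − u_α| = O(1/n). -/

import Mathlib

open Set Filter Function Asymptotics

private lemma invFun_spec_aux {H : ℝ → ℝ} (hm : StrictMono H) (hc : Continuous H)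
    (h0 : Tendsto H atBot (nhds 0)) (h1 : Tendsto H atTop (nhds 1))
    {y : ℝ} (hy : y ∈ Ioo (0:ℝ) 1) : H (invFun H y) = y := by
  obtain ⟨a, ha⟩ := (h0.eventually_lt_const hy.1).exists
  obtain ⟨b, hb⟩ := (h1.eventually_const_lt hy.2).exists
  have hxy : y ∈ Icc (H a) (H b) := ⟨ha.le, hb.le⟩
  obtain ⟨x, hx⟩ := intermediate_value_univ a b hc hxy
  exact invFun_eq ⟨x, hx⟩

private lemma mvt_aux {G g : ℝ → ℝ} (hGc : Continuous G)
    (hg : ∀ x, HasDerivAt G (g x) x) {s t : ℝ} (hst : s < t) :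
    ∃ ξ ∈ Ioo s t, G t - G s = g ξ * (t - s) := by
  obtain ⟨ξ, hξ, h⟩ := exists_hasDerivAt_eq_slope G g hst hGc.continuousOn
    (fun x _ => hg x)
  refine ⟨ξ, hξ, ?_⟩
  rw [h, div_mul_cancel₀]
  exact sub_ne_zero.mpr (ne_of_gt hst)

set_option maxHeartbeats 1600000

/-- Theorem 1 with an explicit `1/n` rate: a Kolmogorov-distance bound of
order `c/n` gives a quantile error bound `c/(n·m_n)`; in particular the
quantiles converge at rate `O(1/n)`. -/
theorem quantile_rate_one_over_n
    (F : ℕ → ℝ → ℝ) (G g : ℝ → ℝ) (c α : ℝ)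
    (hFmono : ∀ n, StrictMono (F n)) (hFc : ∀ n, Continuous (F n))
    (hF0 : ∀ n, Tendsto (F n) atBot (nhds 0))
    (hF1 : ∀ n, Tendsto (F n) atTop (nhds 1))
    (hGmono : StrictMono G) (hGc : Continuous G)
    (hG0 : Tendsto G atBot (nhds 0)) (hG1 : Tendsto G atTop (nhds 1))
    (hg : ∀ x, HasDerivAt G (g x) x) (hgc : Continuous g) (hgpos : ∀ x, 0 < g x)
    (hc : 0 < c)
    (hFG : ∀ n : ℕ, 0 < n → ∀ x, |F n x - G x| ≤ c / n)
    (hα : α ∈ Ioo (0:ℝ) 1) :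
    (∀ n : ℕ, c / min α (1 - α) < n →
      |invFun (F n) (1 - α) - invFun G (1 - α)|
        ≤ c / (n * sInf (g '' Icc (invFun G (1 - α - c / n))
                                  (invFun G (1 - α + c / n))))) ∧
    Tendsto (fun n : ℕ => invFun (F n) (1 - α)) atTop (nhds (invFun G (1 - α))) ∧
    (fun n : ℕ => invFun (F n) (1 - α) - invFun G (1 - α))
      =O[atTop] fun n : ℕ => (1 : ℝ) / n := by
  obtain ⟨hα0, hα1⟩ := hα
  set y : ℝ := 1 - α with hy_def
  have hy : y ∈ Ioo (0:ℝ) 1 := ⟨by simp [hy_def]; linarith, by simp [hy_def]; linarith⟩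
  have hmin : 0 < min α (1 - α) := lt_min hα0 (by linarith)
  have hGinv : ∀ z ∈ Ioo (0:ℝ) 1, G (invFun G z) = z :=
    fun z hz => invFun_spec_aux hGmono hGc hG0 hG1 hz
  have key : ∀ n : ℕ, c / min α (1 - α) < n →
      G (invFun G (y - c / n)) = y - c / n ∧
      G (invFun G (y + c / n)) = y + c / n ∧
      invFun G (y - c / n) ≤ invFun G (y + c / n) ∧
      0 < sInf (g '' Icc (invFun G (y - c / n)) (invFun G (y + c / n))) ∧
      |invFun (F n) y - invFun G y|
        ≤ c / (n * sInf (g '' Icc (invFun G (y - c / n)) (invFun G (y + c / n)))) := by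
    intro n hn
    have hnpos : (0:ℝ) < n := lt_trans (div_pos hc hmin) hn
    set ε : ℝ := c / n with hε_def
    have hε : 0 < ε := div_pos hc hnpos
    have hεmin : ε < min α (1 - α) := by
      rw [hε_def, div_lt_iff₀ hnpos]
      nlinarith [(div_lt_iff₀ hmin).mp hn]
    have hεα : ε < α := lt_of_lt_of_le hεmin (min_le_left _ _)
    have hεy : ε < 1 - α := lt_of_lt_of_le hεmin (min_le_right _ _)
    have hym : y - ε ∈ Ioo (0:ℝ) 1 := ⟨by simp [hy_def]; linarith, by simp [hy_def]; linarith⟩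
    have hyp : y + ε ∈ Ioo (0:ℝ) 1 := ⟨by simp [hy_def]; linarith, by simp [hy_def]; linarith⟩
    set a := invFun G (y - ε) with ha_def
    set b := invFun G (y + ε) with hb_def
    set u := invFun G y with hu_def
    set x := invFun (F n) y with hx_def
    have Ga : G a = y - ε := hGinv _ hym
    have Gb : G b = y + ε := hGinv _ hyp
    have Gu : G u = y := hGinv _ hy
    have Fx : F n x = y := invFun_spec_aux (hFmono n) (hFc n) (hF0 n) (hF1 n) hy
    have hab : a ≤ b := hGmono.le_iff_le.mp (by rw [Ga, Gb]; linarith)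
    have hau : a ≤ u := hGmono.le_iff_le.mp (by rw [Ga, Gu]; linarith)
    have hub : u ≤ b := hGmono.le_iff_le.mp (by rw [Gu, Gb]; linarith)
    have hGxd : |G x - y| ≤ ε := by
      have h1 := hFG n (Nat.cast_pos.mp hnpos) x
      rw [abs_sub_comm] at h1
      calc |G x - y| = |G x - F n x| := by rw [Fx]
        _ ≤ ε := h1
    have hGxd' := abs_le.mp hGxd
    have hax : a ≤ x := hGmono.le_iff_le.mp (by rw [Ga]; linarith [hGxd'.1])
    have hxb : x ≤ b := hGmono.le_iff_le.mp (by rw [Gb]; linarith [hGxd'.2])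
    set m := sInf (g '' Icc a b) with hm_def
    have hcomp : IsCompact (g '' Icc a b) := isCompact_Icc.image hgc
    have himne : (g '' Icc a b).Nonempty := (nonempty_Icc.mpr hab).image g
    obtain ⟨ξ0, _, hξ0⟩ := hcomp.sInf_mem himne
    have hmpos : 0 < m := by rw [hm_def, ← hξ0]; exact hgpos ξ0
    have hmle : ∀ ξ ∈ Icc a b, m ≤ g ξ := fun ξ hξ =>
      csInf_le hcomp.bddBelow ⟨ξ, hξ, rfl⟩
    refine ⟨Ga, Gb, hab, hmpos, ?_⟩
    have hgoal : |x - u| ≤ ε / m := by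
      rcases lt_trichotomy x u with h | h | h
      · obtain ⟨ξ, hξ, hMVT⟩ := mvt_aux hGc hg h
        have hξab : ξ ∈ Icc a b := ⟨le_trans hax hξ.1.le, le_trans hξ.2.le hub⟩
        have h3 : m * (u - x) ≤ G u - G x := by
          rw [hMVT]; exact mul_le_mul_of_nonneg_right (hmle ξ hξab) (by linarith)
        have h2 : G u - G x ≤ ε := by rw [Gu]; linarith [hGxd'.1]
        rw [abs_of_neg (by linarith), le_div_iff₀ hmpos]
        nlinarith
      · rw [h, sub_self, abs_zero]; positivity
      · obtain ⟨ξ, hξ, hMVT⟩ := mvt_aux hGc hg h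
        have hξab : ξ ∈ Icc a b := ⟨le_trans hau hξ.1.le, le_trans hξ.2.le hxb⟩
        have h3 : m * (x - u) ≤ G x - G u := by
          rw [hMVT]; exact mul_le_mul_of_nonneg_right (hmle ξ hξab) (by linarith)
        have h2 : G x - G u ≤ ε := by rw [Gu]; linarith [hGxd'.2]
        rw [abs_of_pos (by linarith), le_div_iff₀ hmpos]
        nlinarith
    calc |x - u| ≤ ε / m := hgoal
      _ = c / (n * m) := by rw [hε_def, div_div]
  -- uniform lower bound for the minima
  obtain ⟨N, hN⟩ := exists_nat_gt (c / min α (1 - α))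
  obtain ⟨GaN, GbN, habN, hm0, _⟩ := key N hN
  set m0 := sInf (g '' Icc (invFun G (y - c / N)) (invFun G (y + c / N))) with hm0_def
  have hbddN : BddBelow (g '' Icc (invFun G (y - c / N)) (invFun G (y + c / N))) :=
    (isCompact_Icc.image hgc).bddBelow
  have hNpos : (0:ℝ) < N := lt_trans (div_pos hc hmin) hN
  have hbound : ∀ n : ℕ, N ≤ n →
      |invFun (F n) y - invFun G y| ≤ (c / m0) * (1 / n) := by
    intro n hn'
    have hncast : (N:ℝ) ≤ n := Nat.cast_le.mpr hn'
    have hnR : c / min α (1 - α) < (n:ℝ) := lt_of_lt_of_le hN hncast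
    obtain ⟨Gan, Gbn, habn, hmn, hmain⟩ := key n hnR
    set mn := sInf (g '' Icc (invFun G (y - c / n)) (invFun G (y + c / n))) with hmn_def
    have hnpos : (0:ℝ) < n := lt_of_lt_of_le hNpos hncast
    have hεle : c / (n:ℝ) ≤ c / N := by
      rw [div_le_div_iff₀ hnpos hNpos]; nlinarith
    have hale : invFun G (y - c / N) ≤ invFun G (y - c / n) :=
      hGmono.le_iff_le.mp (by rw [GaN, Gan]; linarith)
    have hble : invFun G (y + c / n) ≤ invFun G (y + c / N) :=
      hGmono.le_iff_le.mp (by rw [GbN, Gbn]; linarith)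
    have hm0le : m0 ≤ mn :=
      csInf_le_csInf hbddN ((nonempty_Icc.mpr habn).image g)
        (image_mono (f := g) (Icc_subset_Icc hale hble))
    have hstep : c / ((n:ℝ) * mn) ≤ c / ((n:ℝ) * m0) := by
      rw [div_le_div_iff₀ (mul_pos hnpos hmn) (mul_pos hnpos hm0)]
      exact mul_le_mul_of_nonneg_left (mul_le_mul_of_nonneg_left hm0le hnpos.le) hc.le
    calc |invFun (F n) y - invFun G y|
        ≤ c / ((n:ℝ) * mn) := hmain
      _ ≤ c / ((n:ℝ) * m0) := hstep
      _ = (c / m0) * (1 / n) := by rw [mul_one_div, div_div, mul_comm (n:ℝ) m0]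
  have hO : (fun n : ℕ => invFun (F n) y - invFun G y) =O[atTop] fun n : ℕ => (1:ℝ) / n := by
    rw [isBigO_iff]
    refine ⟨c / m0, ?_⟩
    filter_upwards [eventually_ge_atTop N] with n hn
    rw [Real.norm_eq_abs, Real.norm_eq_abs]
    calc |invFun (F n) y - invFun G y| ≤ (c / m0) * (1 / (n:ℝ)) := hbound n hn
      _ ≤ (c / m0) * |1 / (n:ℝ)| :=
        mul_le_mul_of_nonneg_left (le_abs_self _) (div_nonneg hc.le hm0.le)
  have h2 : Tendsto (fun n : ℕ => invFun (F n) y) atTop (nhds (invFun G y)) := by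
    have h3 := hO.trans_tendsto tendsto_one_div_atTop_nhds_zero_nat
    have h4 := h3.add_const (invFun G y)
    simpa using h4
  exact ⟨fun n hn => (key n hn).2.2.2.2, h2, hO⟩
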